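/- arXiv:1511.01858 — 4 statements merged into one kernel-verified Lean document; each statement's English description precedes it below -/
import Mathlib

section
/- Let Ω ⊂ ℂ^n be a bounded open set with nonempty boundary and let ρ : ℂ^n → ℝ be an L-Lipschitz function with ρ(ξ) = 0 for every ξ ∈ ∂Ω. Define ρ̃(z) := sup_{ξ ∈ ∂Ω} (ρ(z) − ‖z − ξ‖²). Then for every z in the closure of Ω one has −ρ̃(z) ≤ (L + diam(cl Ω)) · dist(z, ∂Ω), where dist(z, ∂Ω) denotes the Euclidean distance from z to the boundary of Ω. -/
/-- Let `Ω ⊂ ℂⁿ` be a bounded open set with nonempty boundary and let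
`ρ : ℂⁿ → ℝ` be `L`-Lipschitz with `ρ = 0` on `∂Ω`.  Define
`ρ̃ z := sup_{ξ ∈ ∂Ω} (ρ z − ‖z − ξ‖²)`.  Then for every `z ∈ closure Ω` one has
`−ρ̃ z ≤ (L + diam (closure Ω)) · dist(z, ∂Ω)`. -/
theorem stmt_2 (n : ℕ) (Ω : Set (EuclideanSpace ℂ (Fin n)))
    (hΩopen : IsOpen Ω) (hΩbdd : Bornology.IsBounded Ω)
    (hfr : (frontier Ω).Nonempty)
    (L : NNReal) (ρ : EuclideanSpace ℂ (Fin n) → ℝ) (hρ : LipschitzWith L ρ)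
    (hρ0 : ∀ ξ ∈ frontier Ω, ρ ξ = 0)
    (ρt : EuclideanSpace ℂ (Fin n) → ℝ)
    (hρt : ∀ z, ρt z = sSup ((fun ξ => ρ z - ‖z - ξ‖ ^ 2) '' frontier Ω)) :
    ∀ z ∈ closure Ω,
      -ρt z ≤ ((L : ℝ) + Metric.diam (closure Ω)) * Metric.infDist z (frontier Ω) := by
  intro z hz
  set D := Metric.diam (closure Ω) with hD
  have hC0 : (0:ℝ) ≤ (L : ℝ) + D := add_nonneg (L.coe_nonneg) Metric.diam_nonneg
  -- bounded above
  have hbdd : BddAbove ((fun ξ => ρ z - ‖z - ξ‖ ^ 2) '' frontier Ω) := by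
    refine ⟨ρ z, ?_⟩
    rintro x ⟨ξ, _, rfl⟩
    simp only
    nlinarith [sq_nonneg ‖z - ξ‖]
  -- key pointwise bound
  have key : ∀ ξ ∈ frontier Ω, -ρt z ≤ ((L : ℝ) + D) * dist z ξ := by
    intro ξ hξ
    have h1 : ρ z - ‖z - ξ‖ ^ 2 ≤ ρt z := by
      rw [hρt]
      exact le_csSup hbdd ⟨ξ, hξ, rfl⟩
    have h2 : -ρ z ≤ (L : ℝ) * dist z ξ := by
      have h := hρ.dist_le_mul ξ z
      rw [Real.dist_eq, hρ0 ξ hξ, zero_sub, abs_neg, dist_comm] at h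
      exact (neg_le_abs _).trans h
    have hzd : dist z ξ ≤ D := Metric.dist_le_diam_of_mem hΩbdd.closure hz
      (frontier_subset_closure hξ)
    have hnorm : ‖z - ξ‖ = dist z ξ := (dist_eq_norm z ξ).symm
    nlinarith [dist_nonneg (x := z) (y := ξ)]
  -- pass to the infimum
  rcases eq_or_lt_of_le hC0 with h0 | hpos
  · have := key hfr.choose hfr.choose_spec
    rw [← h0] at this ⊢
    simpa using this
  · haveI := hfr.to_subtype
    rw [Metric.infDist_eq_iInf, mul_comm, ← div_le_iff₀ hpos]
    exact le_ciInf fun ξ => by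
      rw [div_le_iff₀ hpos, mul_comm]; exact key ξ ξ.2
end

section
/- Let Ω ⊂ ℂ^n be a nonempty bounded open set and let u, v, w : cl(Ω) → ℝ satisfy v ≤ u ≤ w on cl(Ω) and v = w on ∂Ω, with u continuous on cl(Ω), v ν-Hölder continuous with constant C_v (0 < ν ≤ 1) and w β-Hölder continuous with constant C_w (0 < β ≤ 1). Fix 0 < δ₁ ≤ δ and let z ∈ Ω with dist(z, ∂Ω) = δ. Define the ball average û_{δ₁}(z) := (1/(τ_{2n} δ₁^{2n})) ∫_{‖ζ−z‖ ≤ δ₁} u(ζ) dV_{2n}(ζ), where τ_{2n} is the Lebesgue volume of the unit ball in ℂ^n and dV_{2n} is Lebesgue measure. Then û_{δ₁}(z) − u(z) ≤ C_w (2δ)^β + C_v δ^ν. -/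
open MeasureTheory

/-- The Borel σ-algebra on `ℂⁿ` (with its Euclidean norm). -/
noncomputable instance (n : ℕ) : MeasurableSpace (EuclideanSpace ℂ (Fin n)) :=
  MeasurableSpace.comap WithLp.ofLp MeasurableSpace.pi

instance (n : ℕ) : BorelSpace (EuclideanSpace ℂ (Fin n)) := PiLp.borelSpace 2

/-- Lebesgue measure `dV_{2n}` on `ℂⁿ`. -/
noncomputable instance (n : ℕ) : MeasureSpace (EuclideanSpace ℂ (Fin n)) :=
  ⟨Measure.map (WithLp.toLp 2 : (Fin n → ℂ) → EuclideanSpace ℂ (Fin n))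
    (inferInstance : MeasureSpace (Fin n → ℂ)).volume⟩

/-- Let `Ω ⊂ ℂⁿ` be a nonempty bounded open set and `u, v, w` with
`v ≤ u ≤ w` on `closure Ω`, `v = w` on `∂Ω`, `u` continuous on `closure Ω`, `v`
`ν`-Hölder with constant `Cv`, `w` `β`-Hölder with constant `Cw`.  Fix `0 < δ₁ ≤ δ` and
`z ∈ Ω` with `dist(z,∂Ω) = δ`.  Then the ball average
`û_{δ₁}(z) = (1/(τ_{2n} δ₁^{2n})) ∫_{‖ζ−z‖ ≤ δ₁} u dV_{2n}` satisfies
`û_{δ₁}(z) − u(z) ≤ Cw (2δ)^β + Cv δ^ν`. -/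
theorem stmt_5 (n : ℕ) (Ω : Set (EuclideanSpace ℂ (Fin n)))
    (hΩopen : IsOpen Ω) (hΩbdd : Bornology.IsBounded Ω) (hΩne : Ω.Nonempty)
    (u v w : EuclideanSpace ℂ (Fin n) → ℝ)
    (hvu : ∀ x ∈ closure Ω, v x ≤ u x) (huw : ∀ x ∈ closure Ω, u x ≤ w x)
    (hvw : ∀ x ∈ frontier Ω, v x = w x)
    (hu : ContinuousOn u (closure Ω))
    (ν Cv β Cw : ℝ) (hν0 : 0 < ν) (hν1 : ν ≤ 1) (hβ0 : 0 < β) (hβ1 : β ≤ 1)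
    (hvH : ∀ x ∈ closure Ω, ∀ y ∈ closure Ω, |v x - v y| ≤ Cv * ‖x - y‖ ^ ν)
    (hwH : ∀ x ∈ closure Ω, ∀ y ∈ closure Ω, |w x - w y| ≤ Cw * ‖x - y‖ ^ β)
    (δ δ₁ : ℝ) (hδ₁0 : 0 < δ₁) (hδ₁δ : δ₁ ≤ δ)
    (z : EuclideanSpace ℂ (Fin n)) (hz : z ∈ Ω)
    (hzδ : Metric.infDist z (frontier Ω) = δ)
    (τ : ℝ) (hτ : τ = (volume (Metric.ball (0 : EuclideanSpace ℂ (Fin n)) 1)).toReal) :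
    (1 / (τ * δ₁ ^ (2 * n))) * (∫ ζ in Metric.closedBall z δ₁, u ζ) - u z ≤
      Cw * (2 * δ) ^ β + Cv * δ ^ ν := by
  have haar : (volume : Measure (EuclideanSpace ℂ (Fin n))).IsAddHaarMeasure := by
    have h : ((volume : Measure (Fin n → ℂ))).IsAddHaarMeasure := inferInstance
    exact (PiLp.continuousLinearEquiv 2 ℝ (fun _ : Fin n => ℂ)).symm.isAddHaarMeasure_map volume
  have hδ0 : 0 < δ := lt_of_lt_of_le hδ₁0 hδ₁δ
  -- frontier nonempty
  have hfr_ne : (frontier Ω).Nonempty := by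
    by_contra h
    rw [Set.not_nonempty_iff_eq_empty] at h
    rw [h, Metric.infDist_empty] at hzδ; linarith
  have hfr_cpt : IsCompact (frontier Ω) :=
    Metric.isCompact_of_isClosed_isBounded isClosed_frontier
      (hΩbdd.closure.subset frontier_subset_closure)
  obtain ⟨ξ, hξfr, hξd⟩ := hfr_cpt.exists_infDist_eq_dist hfr_ne z
  rw [hzδ] at hξd
  have hξcl : ξ ∈ closure Ω := frontier_subset_closure hξfr
  have hzcl : z ∈ closure Ω := subset_closure hz
  -- ball z δ ⊆ Ω
  have hΩne_univ : Ω ≠ Set.univ := by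
    intro h
    rw [h, frontier_univ] at hfr_ne
    exact Set.not_nonempty_empty hfr_ne
  have hball : Metric.ball z δ ⊆ Ω := by
    intro y hy
    by_contra hyΩ
    obtain ⟨p, hpfr, hpd⟩ := exists_mem_frontier_infDist_compl_eq_dist hz hΩne_univ
    have h1 : Metric.infDist z Ωᶜ ≤ dist z y := Metric.infDist_le_dist_of_mem hyΩ
    have h2 : δ ≤ dist z p := hzδ ▸ Metric.infDist_le_dist_of_mem hpfr
    rw [Metric.mem_ball, dist_comm] at hy
    rw [hpd] at h1
    linarith
  have hsubcl : Metric.closedBall z δ₁ ⊆ closure Ω := by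
    have h1 : Metric.closedBall z δ₁ ⊆ Metric.closedBall z δ :=
      Metric.closedBall_subset_closedBall hδ₁δ
    have h2 : Metric.closedBall z δ = closure (Metric.ball z δ) :=
      (closure_ball z hδ0.ne').symm
    rw [h2] at h1
    exact h1.trans (closure_mono hball)
  -- constants nonneg
  have hξz : ‖ξ - z‖ = δ := by
    rw [← dist_eq_norm, dist_comm, ← hξd]
  have hCw : 0 ≤ Cw := by
    have := hwH z hzcl ξ hξcl
    have hpos : (0:ℝ) < ‖z - ξ‖ ^ β := by
      apply Real.rpow_pos_of_pos
      rw [norm_sub_rev, hξz]; exact hδ0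
    nlinarith [abs_nonneg (w z - w ξ)]
  -- pointwise bound
  set M : ℝ := u z + (Cw * (2 * δ) ^ β + Cv * δ ^ ν) with hM
  have hbd : ∀ ζ ∈ Metric.closedBall z δ₁, u ζ ≤ M := by
    intro ζ hζ
    have hζcl : ζ ∈ closure Ω := hsubcl hζ
    have h1 : u ζ ≤ w ζ := huw ζ hζcl
    have h2 : w ζ ≤ w ξ + Cw * ‖ζ - ξ‖ ^ β := by
      have := hwH ζ hζcl ξ hξcl
      have := abs_le.1 this
      linarith [this.2]
    have hle : ‖ζ - ξ‖ ≤ 2 * δ := by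
      have : ‖ζ - ξ‖ ≤ ‖ζ - z‖ + ‖z - ξ‖ := norm_sub_le_norm_sub_add_norm_sub ζ z ξ
      have hζz : ‖ζ - z‖ ≤ δ₁ := by
        rw [Metric.mem_closedBall, dist_eq_norm] at hζ; exact hζ
      rw [norm_sub_rev z ξ, hξz] at this
      linarith
    have h3 : Cw * ‖ζ - ξ‖ ^ β ≤ Cw * (2 * δ) ^ β := by
      apply mul_le_mul_of_nonneg_left _ hCw
      exact Real.rpow_le_rpow (norm_nonneg _) hle hβ0.le
    have h4 : w ξ = v ξ := (hvw ξ hξfr).symm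
    have h5 : v ξ ≤ v z + Cv * δ ^ ν := by
      have := hvH ξ hξcl z hzcl
      rw [hξz] at this
      have := abs_le.1 this
      linarith [this.2]
    have h6 : v z ≤ u z := hvu z hzcl
    rw [hM]; linarith
  -- integrability
  have hint : IntegrableOn u (Metric.closedBall z δ₁) volume :=
    (hu.mono hsubcl).integrableOn_compact (isCompact_closedBall z δ₁)
  -- volume of closed ball
  have hdim : Module.finrank ℝ (EuclideanSpace ℂ (Fin n)) = 2 * n := by
    rw [← Module.finrank_mul_finrank ℝ ℂ (EuclideanSpace ℂ (Fin n)), finrank_euclideanSpace,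
      Complex.finrank_real_complex, Fintype.card_fin]
  have hvol : (volume (Metric.closedBall z δ₁)).toReal = δ₁ ^ (2 * n) * τ := by
    rw [Measure.addHaar_closedBall volume z hδ₁0.le, hdim, hτ]
    rw [ENNReal.toReal_mul, ENNReal.toReal_ofReal (by positivity)]
  have hτpos : 0 < τ := by
    rw [hτ]
    apply ENNReal.toReal_pos
    · exact (Metric.measure_ball_pos volume 0 one_pos).ne'
    · exact measure_ball_lt_top.ne
  -- integral bound
  have hIle : (∫ ζ in Metric.closedBall z δ₁, u ζ) ≤ (δ₁ ^ (2 * n) * τ) * M := by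
    have : (∫ ζ in Metric.closedBall z δ₁, u ζ) ≤
        ∫ _ in Metric.closedBall z δ₁, M := by
      apply setIntegral_mono_on hint (integrableOn_const measure_closedBall_lt_top.ne)
        measurableSet_closedBall hbd
    calc (∫ ζ in Metric.closedBall z δ₁, u ζ) ≤ ∫ _ in Metric.closedBall z δ₁, M := this
      _ = (volume (Metric.closedBall z δ₁)).toReal * M := by rw [setIntegral_const, smul_eq_mul]; rfl
      _ = (δ₁ ^ (2 * n) * τ) * M := by rw [hvol]
  have hden : 0 < τ * δ₁ ^ (2 * n) := by positivity
  have : (1 / (τ * δ₁ ^ (2 * n))) * (∫ ζ in Metric.closedBall z δ₁, u ζ) ≤ M := by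
    rw [div_mul_eq_mul_div, one_mul, div_le_iff₀ hden]
    calc (∫ ζ in Metric.closedBall z δ₁, u ζ) ≤ (δ₁ ^ (2 * n) * τ) * M := hIle
      _ = M * (τ * δ₁ ^ (2 * n)) := by ring
  rw [hM] at this
  linarith
end

section
/- Let Ω ⊂ ℂ^n be a nonempty bounded open set and let u : cl(Ω) → ℝ be a bounded function. Let c > 0, 0 < δ₀ < 1 and 0 < α' ≤ 1, and suppose that for every 0 < δ < δ₀: (i) |u(z₁) − u(z₂)| ≤ c δ^{α'} whenever z₁, z₂ ∈ cl(Ω) satisfy dist(z₁, ∂Ω) ≤ δ, dist(z₂, ∂Ω) ≤ δ and ‖z₁ − z₂‖ ≤ δ; and (ii) u(z + ζ) − u(z) ≤ c δ^{α'} whenever z ∈ Ω with dist(z, ∂Ω) > δ, ‖ζ‖ ≤ δ and z + ζ ∈ cl(Ω). Then u is α'-Hölder continuous on cl(Ω): there exists a constant C > 0, depending only on c, δ₀, α', diam(Ω) and sup_{cl(Ω)} |u|, such that |u(z) − u(w)| ≤ C ‖z − w‖^{α'} for all z, w ∈ cl(Ω). -/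
/-- Let `Ω ⊂ ℂⁿ` be a nonempty bounded open set and `u` bounded on
`closure Ω`.  Let `c > 0`, `0 < δ₀ < 1`, `0 < α' ≤ 1`, and suppose that for every
`0 < δ < δ₀`: (i) `|u z₁ − u z₂| ≤ c δ^{α'}` whenever `z₁, z₂ ∈ closure Ω` are within `δ`
of `∂Ω` and `‖z₁ − z₂‖ ≤ δ`; (ii) `u(z+ζ) − u(z) ≤ c δ^{α'}` whenever `z ∈ Ω` with
`dist(z,∂Ω) > δ`, `‖ζ‖ ≤ δ` and `z + ζ ∈ closure Ω`.  Then `u` is `α'`-Hölder continuous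
on `closure Ω`. -/
theorem stmt_6 (n : ℕ) (Ω : Set (EuclideanSpace ℂ (Fin n)))
    (hΩopen : IsOpen Ω) (hΩbdd : Bornology.IsBounded Ω) (hΩne : Ω.Nonempty)
    (u : EuclideanSpace ℂ (Fin n) → ℝ)
    (M : ℝ) (hbd : ∀ z ∈ closure Ω, |u z| ≤ M)
    (c δ₀ α' : ℝ) (hc : 0 < c) (hδ₀0 : 0 < δ₀) (hδ₀1 : δ₀ < 1)
    (hα'0 : 0 < α') (hα'1 : α' ≤ 1)
    (hbound : ∀ δ : ℝ, 0 < δ → δ < δ₀ → ∀ z₁ ∈ closure Ω, ∀ z₂ ∈ closure Ω,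
      Metric.infDist z₁ (frontier Ω) ≤ δ → Metric.infDist z₂ (frontier Ω) ≤ δ →
      ‖z₁ - z₂‖ ≤ δ → |u z₁ - u z₂| ≤ c * δ ^ α')
    (hint : ∀ δ : ℝ, 0 < δ → δ < δ₀ → ∀ z ∈ Ω, δ < Metric.infDist z (frontier Ω) →
      ∀ ζ : EuclideanSpace ℂ (Fin n), ‖ζ‖ ≤ δ → z + ζ ∈ closure Ω →
      u (z + ζ) - u z ≤ c * δ ^ α') :
    ∃ C : ℝ, 0 < C ∧ ∀ z ∈ closure Ω, ∀ w ∈ closure Ω,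
      |u z - u w| ≤ C * ‖z - w‖ ^ α' := by
  have hM0 : 0 ≤ M := by
    obtain ⟨z₀, hz₀⟩ := hΩne
    exact le_trans (abs_nonneg _) (hbd z₀ (subset_closure hz₀))
  set K : ℝ := (δ₀ / 2) ^ α' with hK
  have hK0 : 0 < K := Real.rpow_pos_of_pos (by linarith) _
  set C : ℝ := 2 * c + 2 * M / K + 1 with hC
  have hCpos : 0 < C := by positivity
  have h2c : 2 * c ≤ C := by
    have : 0 ≤ 2 * M / K := by positivity
    simp only [hC]; linarith
  refine ⟨C, hCpos, ?_⟩
  intro z hz w hw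
  -- membership in Ω from positive distance to frontier
  have memΩ : ∀ x ∈ closure Ω, 0 < Metric.infDist x (frontier Ω) → x ∈ Ω := by
    intro x hx hd
    by_contra hxΩ
    have hxF : x ∈ frontier Ω := by
      rw [frontier, hΩopen.interior_eq]
      exact ⟨hx, hxΩ⟩
    rw [Metric.infDist_zero_of_mem hxF] at hd
    exact lt_irrefl _ hd
  set δ : ℝ := ‖z - w‖ with hδ
  have hδ0 : 0 ≤ δ := norm_nonneg _
  rcases eq_or_lt_of_le hδ0 with hδz | hδpos
  · -- z = w
    have hzw : z = w := sub_eq_zero.mp (norm_eq_zero.mp hδz.symm)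
    rw [hzw]
    simp only [sub_self, abs_zero]
    positivity
  by_cases hbig : δ₀ / 2 ≤ δ
  · -- large distance: use boundedness
    have hKδ : K ≤ δ ^ α' := Real.rpow_le_rpow (by linarith) hbig (le_of_lt hα'0)
    have h1 : |u z - u w| ≤ 2 * M := by
      have hz1 := hbd z hz
      have hw1 := hbd w hw
      have habs : |u z - u w| ≤ |u z| + |u w| := abs_sub _ _
      linarith
    have h2 : 2 * M = (2 * M / K) * K := by field_simp
    have h3 : (2 * M / K) * K ≤ (2 * M / K) * δ ^ α' :=
      mul_le_mul_of_nonneg_left hKδ (by positivity)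
    have h4 : (2 * M / K) * δ ^ α' ≤ C * δ ^ α' := by
      have hδα : 0 ≤ δ ^ α' := Real.rpow_nonneg hδ0 _
      have : 2 * M / K ≤ C := by simp only [hC]; linarith
      exact mul_le_mul_of_nonneg_right this hδα
    calc |u z - u w| ≤ 2 * M := h1
      _ = 2 * M / K * K := h2
      _ ≤ 2 * M / K * δ ^ α' := h3
      _ ≤ C * δ ^ α' := h4
  · -- small distance: δ < δ₀ / 2
    push_neg at hbig
    have hδlt : δ < δ₀ := by linarith
    have h2δlt : 2 * δ < δ₀ := by linarith
    have hδα : 0 ≤ δ ^ α' := Real.rpow_nonneg hδ0 _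
    have key : |u z - u w| ≤ 2 * c * δ ^ α' := by
      by_cases hzF : Metric.infDist z (frontier Ω) ≤ δ
      · by_cases hwF : Metric.infDist w (frontier Ω) ≤ δ
        · have := hbound δ hδpos hδlt z hz w hw hzF hwF le_rfl
          nlinarith
        · -- w far, z near: use hbound with 2δ
          push_neg at hwF
          have hw2 : Metric.infDist w (frontier Ω) ≤ 2 * δ := by
            have := Metric.infDist_le_infDist_add_dist (x := w) (y := z)
              (s := frontier Ω)
            rw [dist_eq_norm] at this
            have : Metric.infDist w (frontier Ω) ≤
                Metric.infDist z (frontier Ω) + ‖w - z‖ := this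
            rw [norm_sub_rev] at this
            linarith
          have hz2 : Metric.infDist z (frontier Ω) ≤ 2 * δ := by linarith
          have := hbound (2 * δ) (by linarith) h2δlt z hz w hw hz2 hw2
            (by linarith)
          have h2α : (2 * δ) ^ α' ≤ 2 * δ ^ α' := by
            rw [Real.mul_rpow (by norm_num) hδ0]
            have h21 : (2 : ℝ) ^ α' ≤ 2 ^ (1 : ℝ) :=
              Real.rpow_le_rpow_of_exponent_le (by norm_num) hα'1
            rw [Real.rpow_one] at h21
            exact mul_le_mul_of_nonneg_right h21 hδα
          nlinarith
      · push_neg at hzF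
        by_cases hwF : Metric.infDist w (frontier Ω) ≤ δ
        · -- z far, w near: use hbound with 2δ
          have hz2 : Metric.infDist z (frontier Ω) ≤ 2 * δ := by
            have := Metric.infDist_le_infDist_add_dist (x := z) (y := w)
              (s := frontier Ω)
            rw [dist_eq_norm] at this
            linarith
          have hw2 : Metric.infDist w (frontier Ω) ≤ 2 * δ := by linarith
          have := hbound (2 * δ) (by linarith) h2δlt z hz w hw hz2 hw2
            (by linarith)
          have h2α : (2 * δ) ^ α' ≤ 2 * δ ^ α' := by
            rw [Real.mul_rpow (by norm_num) hδ0]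
            have h21 : (2 : ℝ) ^ α' ≤ 2 ^ (1 : ℝ) :=
              Real.rpow_le_rpow_of_exponent_le (by norm_num) hα'1
            rw [Real.rpow_one] at h21
            exact mul_le_mul_of_nonneg_right h21 hδα
          nlinarith
        · -- both far: interior estimate both ways
          push_neg at hwF
          have hzΩ : z ∈ Ω := memΩ z hz (lt_trans hδpos hzF)
          have hwΩ : w ∈ Ω := memΩ w hw (lt_trans hδpos hwF)
          have h1 : u w - u z ≤ c * δ ^ α' := by
            have := hint δ hδpos hδlt z hzΩ hzF (w - z)
              (by rw [norm_sub_rev]) (by rw [add_sub_cancel]; exact hw)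
            rwa [add_sub_cancel] at this
          have h2 : u z - u w ≤ c * δ ^ α' := by
            have := hint δ hδpos hδlt w hwΩ hwF (z - w)
              (le_rfl) (by rw [add_sub_cancel]; exact hz)
            rwa [add_sub_cancel] at this
          rw [abs_sub_le_iff]
          constructor <;> nlinarith
    calc |u z - u w| ≤ 2 * c * δ ^ α' := key
      _ ≤ C * δ ^ α' := mul_le_mul_of_nonneg_right h2c hδα
end

section
/- Let Ω ⊂ ℂ^n be a bounded open set, let 0 < ε ≤ 2 and C > 0, and let μ be a finite Borel measure on Ω with μ(B(z,r) ∩ Ω) ≤ C r^{2n−2+ε} for all z ∈ cl(Ω) and all 0 < r < 1. Let ν be a finite Borel measure on Ω, let 0 < δ < 1, and set Ω_δ := {z ∈ Ω : dist(z, ∂Ω) > δ}. Then ∫_{Ω_δ} [ δ^{−2n} ∫_0^δ r^{2n−1} ( ∫_0^r t^{1−2n} ν(B(z,t)) dt ) dr ] dμ(z) ≤ (C / (ε(2n+ε))) ν(Ω) δ^ε. -/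
open MeasureTheory

private lemma my_measurable_rpow_const (p : ℝ) : Measurable fun x : ℝ => x ^ p :=
  measurable_of_continuousOn_compl_singleton 0 <|
    continuousOn_of_forall_continuousAt fun x hx =>
      Real.continuousAt_rpow_const x p (Or.inl hx)

private lemma my_ball_subset_of_lt_infDist {E : Type*} [NormedAddCommGroup E]
    [NormedSpace ℝ E] {Ω : Set E} (hΩ : IsOpen Ω) {z : E} (hz : z ∈ Ω) {d : ℝ}
    (hd : d < Metric.infDist z (frontier Ω)) : Metric.ball z d ⊆ Ω := by
  intro w hw
  by_contra hwΩ
  have hzw : dist w z < d := Metric.mem_ball.mp hw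
  have hfrΩ : frontier Ω = closure Ω \ Ω := by
    rw [frontier, hΩ.interior_eq]
  have hfr : (segment ℝ z w ∩ frontier Ω).Nonempty := by
    by_contra h
    rw [Set.not_nonempty_iff_eq_empty] at h
    have hsub : segment ℝ z w ⊆ Ω ∪ (closure Ω)ᶜ := by
      intro x hx
      have hxfr : x ∉ frontier Ω := fun hxf =>
        Set.eq_empty_iff_forall_notMem.mp h x ⟨hx, hxf⟩
      by_cases hxc : x ∈ closure Ω
      · left
        by_contra hxo
        exact hxfr (hfrΩ ▸ ⟨hxc, hxo⟩)
      · right; exact hxc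
    have hwc : w ∈ (closure Ω)ᶜ := by
      intro hwcl
      have hwfr : w ∉ frontier Ω := fun hxf =>
        Set.eq_empty_iff_forall_notMem.mp h w ⟨right_mem_segment ℝ z w, hxf⟩
      exact hwΩ (by
        by_contra hwo
        exact hwfr (hfrΩ ▸ ⟨hwcl, hwo⟩))
    obtain ⟨x, _, hx2⟩ :=
      (convex_segment z w).isPreconnected Ω (closure Ω)ᶜ hΩ
        isClosed_closure.isOpen_compl hsub
        ⟨z, left_mem_segment ℝ z w, hz⟩ ⟨w, right_mem_segment ℝ z w, hwc⟩
    exact hx2.2 (subset_closure hx2.1)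
  obtain ⟨p, hpseg, hpfr⟩ := hfr
  have hple : dist p z ≤ dist w z := by
    have hsb : segment ℝ z w ⊆ Metric.closedBall z (dist w z) :=
      (convex_closedBall z (dist w z)).segment_subset
        (Metric.mem_closedBall_self dist_nonneg) (Metric.mem_closedBall.mpr le_rfl)
    exact Metric.mem_closedBall.mp (hsb hpseg)
  have hinf : Metric.infDist z (frontier Ω) ≤ dist z p :=
    Metric.infDist_le_dist_of_mem hpfr
  rw [dist_comm z p] at hinf
  linarith

set_option synthInstance.maxHeartbeats 1000000 in
private lemma my_measurable_nu_ball {E : Type*} [MeasurableSpace E]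
    [PseudoMetricSpace E] [SecondCountableTopology E] [OpensMeasurableSpace E]
    (ν : Measure E) [SFinite ν] :
    Measurable fun p : E × ℝ => ν (Metric.ball p.1 p.2) := by
  have h : ∀ p : E × ℝ, Metric.ball p.1 p.2 =
      Prod.mk p ⁻¹' {q : (E × ℝ) × E | dist q.2 q.1.1 < q.1.2} := by
    intro p; ext w; simp [Metric.mem_ball]
  simp_rw [h]
  exact measurable_measure_prodMk_left
    (measurableSet_lt (continuous_snd.dist continuous_fst.fst).measurable
      continuous_fst.snd.measurable)

open intervalIntegral in
private lemma my_scalar_lint {p c r : ℝ} (hp : -1 < p) (hc : 0 ≤ c) (hr : 0 < r) :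
    ∫⁻ t in Set.Ioc (0 : ℝ) r, ENNReal.ofReal (c * t ^ p) ∂volume
      = ENNReal.ofReal (c * (r ^ (p + 1) / (p + 1))) := by
  have hint : IntegrableOn (fun t => c * t ^ p) (Set.Ioc (0 : ℝ) r) volume := by
    have h := (intervalIntegrable_rpow' (a := 0) (b := r) hp).const_mul c
    rwa [_root_.intervalIntegrable_iff_integrableOn_Ioc_of_le hr.le] at h
  have hnn : 0 ≤ᵐ[volume.restrict (Set.Ioc (0 : ℝ) r)] fun t => c * t ^ p := by
    filter_upwards [ae_restrict_mem measurableSet_Ioc] with t ht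
    exact mul_nonneg hc (Real.rpow_nonneg ht.1.le p)
  rw [← MeasureTheory.ofReal_integral_eq_lintegral_ofReal hint hnn]
  congr 1
  have h1 : ∫ t in Set.Ioc (0 : ℝ) r, c * t ^ p = ∫ t in (0 : ℝ)..r, c * t ^ p :=
    (integral_of_le hr.le).symm
  rw [h1, intervalIntegral.integral_const_mul, _root_.integral_rpow (Or.inl hp),
    Real.zero_rpow (by linarith : p + 1 ≠ 0)]
  ring

/-- Let `Ω ⊂ ℂⁿ` be a bounded open set, `0 < ε ≤ 2`, `C > 0`, `μ` a
finite Borel measure with `μ(B(z,r) ∩ Ω) ≤ C r^{2n−2+ε}` for all `z ∈ closure Ω` and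
`0 < r < 1`, `ν` a finite Borel measure on `Ω`, `0 < δ < 1`, and
`Ω_δ = {z ∈ Ω : dist(z,∂Ω) > δ}`.  Then
`∫_{Ω_δ} [δ^{−2n} ∫_0^δ r^{2n−1} (∫_0^r t^{1−2n} ν(B(z,t)) dt) dr] dμ(z)
  ≤ (C/(ε(2n+ε))) ν(Ω) δ^ε`. -/
theorem stmt_8 (n : ℕ) (hn : 0 < n) (Ω : Set (EuclideanSpace ℂ (Fin n)))
    (hΩopen : IsOpen Ω) (hΩbdd : Bornology.IsBounded Ω)
    (ε C : ℝ) (hε0 : 0 < ε) (hε2 : ε ≤ 2) (hC : 0 < C)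
    (μ ν : Measure (EuclideanSpace ℂ (Fin n)))
    [IsFiniteMeasure μ] [IsFiniteMeasure ν]
    (hμ : ∀ z ∈ closure Ω, ∀ r : ℝ, 0 < r → r < 1 →
      μ (Metric.ball z r ∩ Ω) ≤ ENNReal.ofReal (C * r ^ (2 * (n : ℝ) - 2 + ε)))
    (δ : ℝ) (hδ0 : 0 < δ) (hδ1 : δ < 1) :
    ∫⁻ z in {z ∈ Ω | δ < Metric.infDist z (frontier Ω)},
        ENNReal.ofReal (δ ^ (-(2 * (n : ℝ)))) *
          ∫⁻ r in Set.Ioc (0 : ℝ) δ,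
            ENNReal.ofReal (r ^ (2 * (n : ℝ) - 1)) *
              ∫⁻ t in Set.Ioc (0 : ℝ) r,
                ENNReal.ofReal (t ^ (1 - 2 * (n : ℝ))) * ν (Metric.ball z t) ∂volume
            ∂volume ∂μ
      ≤ ENNReal.ofReal (C / (ε * (2 * (n : ℝ) + ε))) * ν Ω * ENNReal.ofReal (δ ^ ε) := by
  set S : Set (EuclideanSpace ℂ (Fin n)) :=
    {z ∈ Ω | δ < Metric.infDist z (frontier Ω)} with hSdef
  have hSm : MeasurableSet S := by
    have h : S = Ω ∩ {z | δ < Metric.infDist z (frontier Ω)} := rfl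
    rw [h]
    exact hΩopen.measurableSet.inter
      (measurableSet_lt measurable_const (Metric.continuous_infDist_pt _).measurable)
  have hSΩ : S ⊆ Ω := fun z hz => hz.1
  have hn1 : (1 : ℝ) ≤ (n : ℝ) := by exact_mod_cast hn
  -- Key estimate: for 0 < t ≤ δ, ∫_S ν(B(z,t)) dμ ≤ C t^{2n-2+ε} ν(Ω)
  have keyA : ∀ t : ℝ, 0 < t → t ≤ δ →
      ∫⁻ z in S, ν (Metric.ball z t) ∂μ
        ≤ ENNReal.ofReal (C * t ^ (2 * (n : ℝ) - 2 + ε)) * ν Ω := by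
    intro t ht0 htδ
    have hT : MeasurableSet {q : (EuclideanSpace ℂ (Fin n)) × (EuclideanSpace ℂ (Fin n)) |
        dist q.1 q.2 < t} :=
      measurableSet_lt (continuous_fst.dist continuous_snd).measurable measurable_const
    have e1 : ∫⁻ z in S, ν (Metric.ball z t) ∂μ
        = ((μ.restrict S).prod ν) {q | dist q.1 q.2 < t} := by
      rw [Measure.prod_apply hT]
      refine lintegral_congr fun z => ?_
      congr 1
      ext w
      simp [Metric.mem_ball, dist_comm]
    rw [e1, Measure.prod_apply_symm hT]
    refine le_trans (lintegral_mono fun w => ?_)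
      (le_of_eq (lintegral_indicator_const hΩopen.measurableSet _))
    have e2 : ((fun z => (z, w)) ⁻¹'
        {q : (EuclideanSpace ℂ (Fin n)) × (EuclideanSpace ℂ (Fin n)) | dist q.1 q.2 < t})
        = Metric.ball w t := by
      ext z; simp [Metric.mem_ball]
    rw [e2, Measure.restrict_apply' hSm]
    by_cases hw : w ∈ Ω
    · rw [Set.indicator_of_mem hw]
      exact (measure_mono (Set.inter_subset_inter_right _ hSΩ)).trans
        (hμ w (subset_closure hw) t ht0 (lt_of_le_of_lt htδ hδ1))
    · rw [Set.indicator_of_notMem hw]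
      have hempty : Metric.ball w t ∩ S = ∅ := by
        rw [Set.eq_empty_iff_forall_notMem]
        rintro z ⟨hz1, hz2⟩
        refine hw (my_ball_subset_of_lt_infDist hΩopen hz2.1 hz2.2 ?_)
        rw [Metric.mem_ball, dist_comm]
        exact lt_of_lt_of_le (Metric.mem_ball.mp hz1) htδ
      simp [hempty]
  -- measurability facts
  have hmb : Measurable fun p : (EuclideanSpace ℂ (Fin n)) × ℝ => ν (Metric.ball p.1 p.2) :=
    my_measurable_nu_ball ν
  have hG : Measurable fun q : (EuclideanSpace ℂ (Fin n)) × ℝ =>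
      ENNReal.ofReal (q.2 ^ (1 - 2 * (n : ℝ))) * ν (Metric.ball q.1 q.2) :=
    (ENNReal.measurable_ofReal.comp ((my_measurable_rpow_const _).comp measurable_snd)).mul hmb
  have hΨ : Measurable fun p : (EuclideanSpace ℂ (Fin n)) × ℝ =>
      ∫⁻ t in Set.Ioc (0 : ℝ) p.2,
        ENNReal.ofReal (t ^ (1 - 2 * (n : ℝ))) * ν (Metric.ball p.1 t) ∂volume := by
    have hrw : ∀ p : (EuclideanSpace ℂ (Fin n)) × ℝ,
        (∫⁻ t in Set.Ioc (0 : ℝ) p.2,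
          ENNReal.ofReal (t ^ (1 - 2 * (n : ℝ))) * ν (Metric.ball p.1 t) ∂volume)
        = ∫⁻ t, ({q : ((EuclideanSpace ℂ (Fin n)) × ℝ) × ℝ | 0 < q.2 ∧ q.2 ≤ q.1.2}).indicator
            (fun q => ENNReal.ofReal (q.2 ^ (1 - 2 * (n : ℝ))) * ν (Metric.ball q.1.1 q.2))
            (p, t) ∂volume := by
      intro p
      rw [← lintegral_indicator measurableSet_Ioc]
      refine lintegral_congr fun t => ?_
      by_cases ht : t ∈ Set.Ioc (0 : ℝ) p.2
      · rw [Set.indicator_of_mem ht, Set.indicator_of_mem (by exact ⟨ht.1, ht.2⟩)]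
      · rw [Set.indicator_of_notMem ht,
          Set.indicator_of_notMem (by simpa [Set.mem_Ioc] using ht)]
    simp_rw [hrw]
    refine Measurable.lintegral_prod_right' ?_
    refine Measurable.indicator ?_ ?_
    · exact (ENNReal.measurable_ofReal.comp
        ((my_measurable_rpow_const _).comp measurable_snd)).mul
        (hmb.comp (measurable_fst.fst.prodMk measurable_snd))
    · exact (measurableSet_lt measurable_const measurable_snd).inter
        (measurableSet_le measurable_snd measurable_fst.snd)
  -- step 1
  have step1 : ∀ r : ℝ, 0 < r → r ≤ δ →
      (∫⁻ z in S, ∫⁻ t in Set.Ioc (0 : ℝ) r,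
        ENNReal.ofReal (t ^ (1 - 2 * (n : ℝ))) * ν (Metric.ball z t) ∂volume ∂μ)
        ≤ ENNReal.ofReal (C * (r ^ ε / ε)) * ν Ω := by
    intro r hr0 hrδ
    have hswap : (∫⁻ z in S, ∫⁻ t in Set.Ioc (0 : ℝ) r,
        ENNReal.ofReal (t ^ (1 - 2 * (n : ℝ))) * ν (Metric.ball z t) ∂volume ∂μ)
        = ∫⁻ t in Set.Ioc (0 : ℝ) r, ∫⁻ z in S,
            ENNReal.ofReal (t ^ (1 - 2 * (n : ℝ))) * ν (Metric.ball z t) ∂μ ∂volume :=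
      lintegral_lintegral_swap hG.aemeasurable
    rw [hswap]
    calc ∫⁻ t in Set.Ioc (0 : ℝ) r, ∫⁻ z in S,
          ENNReal.ofReal (t ^ (1 - 2 * (n : ℝ))) * ν (Metric.ball z t) ∂μ ∂volume
        = ∫⁻ t in Set.Ioc (0 : ℝ) r, ENNReal.ofReal (t ^ (1 - 2 * (n : ℝ))) *
            ∫⁻ z in S, ν (Metric.ball z t) ∂μ ∂volume :=
          lintegral_congr fun t => lintegral_const_mul' _ _ ENNReal.ofReal_ne_top
      _ ≤ ∫⁻ t in Set.Ioc (0 : ℝ) r, ENNReal.ofReal (C * t ^ (ε - 1)) * ν Ω ∂volume := by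
          refine setLIntegral_mono' measurableSet_Ioc fun t ht => ?_
          refine le_trans (mul_le_mul_right (keyA t ht.1 (ht.2.trans hrδ)) _) (le_of_eq ?_)
          rw [← mul_assoc, ← ENNReal.ofReal_mul (Real.rpow_nonneg ht.1.le _)]
          congr 2
          calc t ^ (1 - 2 * (n : ℝ)) * (C * t ^ (2 * (n : ℝ) - 2 + ε))
              = C * (t ^ (1 - 2 * (n : ℝ)) * t ^ (2 * (n : ℝ) - 2 + ε)) := by ring
            _ = C * t ^ (ε - 1) := by
                rw [← Real.rpow_add ht.1]
                congr 1
                ring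
      _ = ENNReal.ofReal (C * (r ^ ε / ε)) * ν Ω := by
          rw [lintegral_mul_const' _ _ (measure_ne_top ν Ω)]
          congr 1
          have h := my_scalar_lint (p := ε - 1) (c := C) (by linarith) hC.le hr0
          rw [show ε - 1 + 1 = ε by ring] at h
          exact h
  -- main computation
  rw [lintegral_const_mul' _ _ (ENNReal.ofReal_ne_top)]
  have hmeas2 : Measurable fun q : (EuclideanSpace ℂ (Fin n)) × ℝ =>
      ENNReal.ofReal (q.2 ^ (2 * (n : ℝ) - 1)) *
        ∫⁻ t in Set.Ioc (0 : ℝ) q.2,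
          ENNReal.ofReal (t ^ (1 - 2 * (n : ℝ))) * ν (Metric.ball q.1 t) ∂volume :=
    (ENNReal.measurable_ofReal.comp ((my_measurable_rpow_const _).comp measurable_snd)).mul hΨ
  have hswap1 : (∫⁻ z in S, ∫⁻ r in Set.Ioc (0 : ℝ) δ,
      ENNReal.ofReal (r ^ (2 * (n : ℝ) - 1)) *
        ∫⁻ t in Set.Ioc (0 : ℝ) r,
          ENNReal.ofReal (t ^ (1 - 2 * (n : ℝ))) * ν (Metric.ball z t) ∂volume ∂volume ∂μ)
      = ∫⁻ r in Set.Ioc (0 : ℝ) δ, ∫⁻ z in S,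
          ENNReal.ofReal (r ^ (2 * (n : ℝ) - 1)) *
            ∫⁻ t in Set.Ioc (0 : ℝ) r,
              ENNReal.ofReal (t ^ (1 - 2 * (n : ℝ))) * ν (Metric.ball z t) ∂volume ∂μ ∂volume :=
    lintegral_lintegral_swap hmeas2.aemeasurable
  rw [hswap1]
  have hbound : (∫⁻ r in Set.Ioc (0 : ℝ) δ, ∫⁻ z in S,
      ENNReal.ofReal (r ^ (2 * (n : ℝ) - 1)) *
        ∫⁻ t in Set.Ioc (0 : ℝ) r,
          ENNReal.ofReal (t ^ (1 - 2 * (n : ℝ))) * ν (Metric.ball z t) ∂volume ∂μ ∂volume)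
      ≤ ENNReal.ofReal ((C / ε) * (δ ^ (2 * (n : ℝ) + ε) / (2 * (n : ℝ) + ε))) * ν Ω := by
    calc (∫⁻ r in Set.Ioc (0 : ℝ) δ, ∫⁻ z in S,
        ENNReal.ofReal (r ^ (2 * (n : ℝ) - 1)) *
          ∫⁻ t in Set.Ioc (0 : ℝ) r,
            ENNReal.ofReal (t ^ (1 - 2 * (n : ℝ))) * ν (Metric.ball z t) ∂volume ∂μ ∂volume)
        = ∫⁻ r in Set.Ioc (0 : ℝ) δ, ENNReal.ofReal (r ^ (2 * (n : ℝ) - 1)) *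
            ∫⁻ z in S, ∫⁻ t in Set.Ioc (0 : ℝ) r,
              ENNReal.ofReal (t ^ (1 - 2 * (n : ℝ))) * ν (Metric.ball z t) ∂volume ∂μ ∂volume :=
          lintegral_congr fun r => lintegral_const_mul' _ _ ENNReal.ofReal_ne_top
      _ ≤ ∫⁻ r in Set.Ioc (0 : ℝ) δ,
            ENNReal.ofReal ((C / ε) * r ^ (2 * (n : ℝ) - 1 + ε)) * ν Ω ∂volume := by
          refine setLIntegral_mono' measurableSet_Ioc fun r hr => ?_
          refine le_trans (mul_le_mul_right (step1 r hr.1 hr.2) _) (le_of_eq ?_)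
          rw [← mul_assoc, ← ENNReal.ofReal_mul (Real.rpow_nonneg hr.1.le _)]
          congr 2
          calc r ^ (2 * (n : ℝ) - 1) * (C * (r ^ ε / ε))
              = (C / ε) * (r ^ (2 * (n : ℝ) - 1) * r ^ ε) := by ring
            _ = (C / ε) * r ^ (2 * (n : ℝ) - 1 + ε) := by
                rw [← Real.rpow_add hr.1]
      _ = ENNReal.ofReal ((C / ε) * (δ ^ (2 * (n : ℝ) + ε) / (2 * (n : ℝ) + ε))) * ν Ω := by
          rw [lintegral_mul_const' _ _ (measure_ne_top ν Ω)]
          congr 1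
          have h := my_scalar_lint (p := 2 * (n : ℝ) - 1 + ε) (c := C / ε)
            (by nlinarith) (div_nonneg hC.le hε0.le) hδ0
          rw [show 2 * (n : ℝ) - 1 + ε + 1 = 2 * (n : ℝ) + ε by ring] at h
          exact h
  refine le_trans (mul_le_mul_right hbound _) (le_of_eq ?_)
  rw [← mul_assoc, ← ENNReal.ofReal_mul (Real.rpow_nonneg hδ0.le _)]
  have hpow : δ ^ (-(2 * (n : ℝ))) * δ ^ (2 * (n : ℝ) + ε) = δ ^ ε := by
    rw [← Real.rpow_add hδ0]
    congr 1
    ring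
  have hreal : δ ^ (-(2 * (n : ℝ))) * ((C / ε) * (δ ^ (2 * (n : ℝ) + ε) / (2 * (n : ℝ) + ε)))
      = C / (ε * (2 * (n : ℝ) + ε)) * δ ^ ε := by
    calc δ ^ (-(2 * (n : ℝ))) * ((C / ε) * (δ ^ (2 * (n : ℝ) + ε) / (2 * (n : ℝ) + ε)))
        = (C / ε) * (1 / (2 * (n : ℝ) + ε)) *
            (δ ^ (-(2 * (n : ℝ))) * δ ^ (2 * (n : ℝ) + ε)) := by ring
      _ = C / (ε * (2 * (n : ℝ) + ε)) * δ ^ ε := by rw [hpow, div_mul_div_comm, mul_one]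
  rw [hreal, ENNReal.ofReal_mul (by positivity)]
  ring
end
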